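/- A transitive TDS (X,T) is FK-continuous if and only if ρ_FK(x,y) = 0 for every x,y ∈ X. -/

import Mathlib

open Filter Topology MeasureTheory Set

namespace FKPaper

variable {X : Type*} [MetricSpace X]

/-- The maximal fit of an `(n,δ)`-match between the orbits of `x` and `z` under `T`:
the largest cardinality of the domain of an order-preserving bijection
`π : D → R`, with `D, R ⊆ {0,…,n-1}` and `dist (T^[i] x) (T^[π i] z) < δ` for `i ∈ D`. -/
noncomputable def maxFit (T : X → X) (δ : ℝ) (n : ℕ) (x z : X) : ℕ :=
  sSup {k : ℕ | ∃ i j : Fin k → ℕ, StrictMono i ∧ StrictMono j ∧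
    (∀ s, i s < n) ∧ (∀ s, j s < n) ∧ ∀ s, dist (T^[i s] x) (T^[j s] z) < δ}

/-- `f̄_{n,δ}(x,z) = 1 - (maximal fit of an (n,δ)-match of x and z)/n`. -/
noncomputable def fbarN (T : X → X) (δ : ℝ) (n : ℕ) (x z : X) : ℝ :=
  1 - (maxFit T δ n x z : ℝ) / n

/-- `f̄_δ(x,z) = limsup_{n→∞} f̄_{n,δ}(x,z)`. -/
noncomputable def fbar (T : X → X) (δ : ℝ) (x z : X) : ℝ :=
  Filter.limsup (fun n => fbarN T δ n x z) Filter.atTop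

/-- The Feldman–Katok pseudometric `ρ_FK(x,z) = inf {δ > 0 : f̄_δ(x,z) < δ}`. -/
noncomputable def rhoFK (T : X → X) (x z : X) : ℝ :=
  sInf {δ : ℝ | 0 < δ ∧ fbar T δ x z < δ}

/-- `x` is an FK-continuity point for `(X,T)`. -/
def FKContinuityPoint (T : X → X) (x : X) : Prop :=
  ∀ ε > 0, ∃ δ > 0, ∀ y : X, dist x y ≤ δ → rhoFK T x y ≤ ε

/-- The set of FK-continuity points. -/
def EqFK (T : X → X) : Set X := {x : X | FKContinuityPoint T x}

/-- Topological transitivity. -/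
def IsTransitive (T : X → X) : Prop :=
  ∀ U V : Set X, IsOpen U → IsOpen V → U.Nonempty → V.Nonempty →
    ∃ n : ℕ, 0 < n ∧ ((T^[n]) ⁻¹' U ∩ V).Nonempty

end FKPaper

open Filter Topology Set

namespace FKAux
open FKPaper

variable {X : Type*} [MetricSpace X]

def MS (T : X → X) (δ : ℝ) (n : ℕ) (x z : X) : Set ℕ :=
  {k : ℕ | ∃ i j : Fin k → ℕ, StrictMono i ∧ StrictMono j ∧
    (∀ s, i s < n) ∧ (∀ s, j s < n) ∧ ∀ s, dist (T^[i s] x) (T^[j s] z) < δ}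

lemma maxFit_def (T : X → X) (δ : ℝ) (n : ℕ) (x z : X) :
    maxFit T δ n x z = sSup (MS T δ n x z) := rfl

lemma zero_mem_MS (T : X → X) (δ : ℝ) (n : ℕ) (x z : X) : 0 ∈ MS T δ n x z :=
  ⟨Fin.elim0, Fin.elim0, fun s => s.elim0, fun s => s.elim0, fun s => s.elim0,
    fun s => s.elim0, fun s => s.elim0⟩

lemma le_of_mem_MS {T : X → X} {δ : ℝ} {n k : ℕ} {x z : X} (h : k ∈ MS T δ n x z) : k ≤ n := by
  obtain ⟨i, j, hi, hj, hin, hjn, _⟩ := h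
  have hinj : Function.Injective (fun s : Fin k => (⟨i s, hin s⟩ : Fin n)) := by
    intro a b hab
    exact hi.injective (by simpa using congrArg Fin.val hab)
  simpa using Fintype.card_le_of_injective _ hinj

lemma bddAbove_MS (T : X → X) (δ : ℝ) (n : ℕ) (x z : X) : BddAbove (MS T δ n x z) :=
  ⟨n, fun _ hk => le_of_mem_MS hk⟩

lemma maxFit_mem (T : X → X) (δ : ℝ) (n : ℕ) (x z : X) : maxFit T δ n x z ∈ MS T δ n x z :=
  Nat.sSup_mem ⟨0, zero_mem_MS T δ n x z⟩ (bddAbove_MS T δ n x z)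

lemma le_maxFit {T : X → X} {δ : ℝ} {n k : ℕ} {x z : X} (h : k ∈ MS T δ n x z) :
    k ≤ maxFit T δ n x z :=
  le_csSup (bddAbove_MS T δ n x z) h

lemma maxFit_le (T : X → X) (δ : ℝ) (n : ℕ) (x z : X) : maxFit T δ n x z ≤ n :=
  le_of_mem_MS (maxFit_mem T δ n x z)

/-! ### Bounds on `fbarN` and `fbar` -/

lemma fbarN_nonneg (T : X → X) (δ : ℝ) (n : ℕ) (x z : X) : 0 ≤ fbarN T δ n x z := by
  unfold fbarN
  rcases Nat.eq_zero_or_pos n with h | h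
  · subst h; simp
  · have hn : (0:ℝ) < n := by exact_mod_cast h
    have : (maxFit T δ n x z : ℝ) ≤ n := by exact_mod_cast maxFit_le T δ n x z
    have := div_le_one_of_le₀ this hn.le
    linarith

lemma fbarN_le_one (T : X → X) (δ : ℝ) (n : ℕ) (x z : X) : fbarN T δ n x z ≤ 1 := by
  unfold fbarN
  have : (0:ℝ) ≤ (maxFit T δ n x z : ℝ) / n := by positivity
  linarith

lemma fbarN_bddUnder (T : X → X) (δ : ℝ) (x z : X) :
    IsBoundedUnder (· ≥ ·) atTop (fun n => fbarN T δ n x z) :=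
  isBoundedUnder_of ⟨0, fun n => fbarN_nonneg T δ n x z⟩

lemma fbarN_bddAbove (T : X → X) (δ : ℝ) (x z : X) :
    IsBoundedUnder (· ≤ ·) atTop (fun n => fbarN T δ n x z) :=
  isBoundedUnder_of ⟨1, fun n => fbarN_le_one T δ n x z⟩

lemma fbar_le_one (T : X → X) (δ : ℝ) (x z : X) : fbar T δ x z ≤ 1 :=
  limsup_le_of_le ((fbarN_bddUnder T δ x z).isCoboundedUnder_le)
    (Eventually.of_forall fun n => fbarN_le_one T δ n x z)

/-! ### Basic facts about `rhoFK` -/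

lemma rho_set_nonempty (T : X → X) (x z : X) :
    {δ : ℝ | 0 < δ ∧ fbar T δ x z < δ}.Nonempty :=
  ⟨2, by norm_num, (fbar_le_one T 2 x z).trans_lt (by norm_num)⟩

lemma rho_set_bddBelow (T : X → X) (x z : X) :
    BddBelow {δ : ℝ | 0 < δ ∧ fbar T δ x z < δ} :=
  ⟨0, fun δ hδ => hδ.1.le⟩

lemma rho_nonneg (T : X → X) (x z : X) : 0 ≤ rhoFK T x z :=
  le_csInf (rho_set_nonempty T x z) fun δ hδ => hδ.1.le

lemma rho_le_of_mem {T : X → X} {x z : X} {δ : ℝ} (h0 : 0 < δ) (h : fbar T δ x z < δ) :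
    rhoFK T x z ≤ δ :=
  csInf_le (rho_set_bddBelow T x z) ⟨h0, h⟩

/-! ### Symmetry -/

lemma MS_symm (T : X → X) (δ : ℝ) (n : ℕ) (x z : X) : MS T δ n x z = MS T δ n z x := by
  have key : ∀ a b : X, MS T δ n a b ⊆ MS T δ n b a := by
    rintro a b k ⟨i, j, hi, hj, hin, hjn, hd⟩
    exact ⟨j, i, hj, hi, hjn, hin, fun s => by rw [dist_comm]; exact hd s⟩
  exact le_antisymm (key x z) (key z x)

lemma fbar_symm (T : X → X) (δ : ℝ) (x z : X) : fbar T δ x z = fbar T δ z x := by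
  unfold fbar fbarN
  simp only [maxFit_def, MS_symm T δ _ x z]

lemma rho_symm (T : X → X) (x z : X) : rhoFK T x z = rhoFK T z x := by
  unfold rhoFK
  simp only [fbar_symm T _ x z]

end FKAux

namespace FKAux
open FKPaper

section
variable {X : Type*} [MetricSpace X]

/-- Composition of matches: the key combinatorial estimate. -/
lemma MS_comp (T : X → X) {δ1 δ2 : ℝ} {n k1 k2 : ℕ} {x y z : X}
    (h1 : k1 ∈ MS T δ1 n x y) (h2 : k2 ∈ MS T δ2 n y z) :
    k1 + k2 ≤ n + maxFit T (δ1 + δ2) n x z := by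
  obtain ⟨i1, j1, hi1, hj1, hi1n, hj1n, hd1⟩ := h1
  obtain ⟨i2, j2, hi2, hj2, hi2n, hj2n, hd2⟩ := h2
  have hAcard : (Finset.image j1 Finset.univ).card = k1 := by
    rw [Finset.card_image_of_injective _ hj1.injective, Finset.card_univ, Fintype.card_fin]
  have hBcard : (Finset.image i2 Finset.univ).card = k2 := by
    rw [Finset.card_image_of_injective _ hi2.injective, Finset.card_univ, Fintype.card_fin]
  have hUnion : Finset.image j1 Finset.univ ∪ Finset.image i2 Finset.univ ⊆ Finset.range n := by
    intro a ha
    rcases Finset.mem_union.1 ha with h | h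
    · obtain ⟨s, _, rfl⟩ := Finset.mem_image.1 h
      exact Finset.mem_range.2 (hj1n s)
    · obtain ⟨s, _, rfl⟩ := Finset.mem_image.1 h
      exact Finset.mem_range.2 (hi2n s)
  have hcard : k1 + k2 ≤ n +
      (Finset.image j1 Finset.univ ∩ Finset.image i2 Finset.univ).card := by
    have hcap := Finset.card_union_add_card_inter (Finset.image j1 Finset.univ)
      (Finset.image i2 Finset.univ)
    have h2' : (Finset.image j1 Finset.univ ∪ Finset.image i2 Finset.univ).card ≤ n := by
      simpa using Finset.card_le_card hUnion
    omega
  have hmem : (Finset.image j1 Finset.univ ∩ Finset.image i2 Finset.univ).card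
      ∈ MS T (δ1 + δ2) n x z := by
    set C := Finset.image j1 Finset.univ ∩ Finset.image i2 Finset.univ with hC
    set e := C.orderIsoOfFin rfl with he
    have htmono : StrictMono (fun s : Fin C.card => ((e s : ℕ))) := fun a b hab => by
      exact_mod_cast (Subtype.coe_lt_coe.2 (e.strictMono hab))
    have htA : ∀ s : Fin C.card, (e s : ℕ) ∈ Finset.image j1 Finset.univ :=
      fun s => (Finset.mem_inter.1 (e s).2).1
    have htB : ∀ s : Fin C.card, (e s : ℕ) ∈ Finset.image i2 Finset.univ :=
      fun s => (Finset.mem_inter.1 (e s).2).2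
    have hp' : ∀ s : Fin C.card, ∃ a : Fin k1, j1 a = (e s : ℕ) := by
      intro s
      obtain ⟨a, _, ha⟩ := Finset.mem_image.1 (htA s)
      exact ⟨a, ha⟩
    have hq' : ∀ s : Fin C.card, ∃ b : Fin k2, i2 b = (e s : ℕ) := by
      intro s
      obtain ⟨b, _, hb⟩ := Finset.mem_image.1 (htB s)
      exact ⟨b, hb⟩
    choose p hp using hp'
    choose q hq using hq'
    refine ⟨fun s => i1 (p s), fun s => j2 (q s), ?_, ?_, fun s => hi1n (p s),
      fun s => hj2n (q s), ?_⟩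
    · intro a b hab
      have h1 : j1 (p a) < j1 (p b) := by rw [hp, hp]; exact htmono hab
      exact hi1 (hj1.lt_iff_lt.1 h1)
    · intro a b hab
      have h1 : i2 (q a) < i2 (q b) := by rw [hq, hq]; exact htmono hab
      exact hj2 (hi2.lt_iff_lt.1 h1)
    · intro s
      have key : T^[j1 (p s)] y = T^[i2 (q s)] y := by rw [hp, hq]
      calc dist (T^[i1 (p s)] x) (T^[j2 (q s)] z)
          ≤ dist (T^[i1 (p s)] x) (T^[j1 (p s)] y)
            + dist (T^[j1 (p s)] y) (T^[j2 (q s)] z) := dist_triangle _ _ _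
        _ < δ1 + δ2 := by
            refine add_lt_add (hd1 (p s)) ?_
            rw [key]; exact hd2 (q s)
  exact hcard.trans (by gcongr; exact le_maxFit hmem)

lemma maxFit_comp (T : X → X) (δ1 δ2 : ℝ) (n : ℕ) (x y z : X) :
    maxFit T δ1 n x y + maxFit T δ2 n y z ≤ n + maxFit T (δ1 + δ2) n x z :=
  MS_comp T (maxFit_mem T δ1 n x y) (maxFit_mem T δ2 n y z)

lemma fbarN_triangle (T : X → X) (δ1 δ2 : ℝ) (n : ℕ) (x y z : X) :
    fbarN T (δ1 + δ2) n x z ≤ fbarN T δ1 n x y + fbarN T δ2 n y z := by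
  unfold fbarN
  rcases Nat.eq_zero_or_pos n with h | h
  · subst h; simp
  · have hn : (0:ℝ) < n := by exact_mod_cast h
    have key : (maxFit T δ1 n x y : ℝ) + maxFit T δ2 n y z
        ≤ n + maxFit T (δ1 + δ2) n x z := by exact_mod_cast maxFit_comp T δ1 δ2 n x y z
    have e1 : (maxFit T δ1 n x y : ℝ)/n + (maxFit T δ2 n y z : ℝ)/n
        ≤ 1 + (maxFit T (δ1+δ2) n x z : ℝ)/n := by
      rw [← add_div, ← div_self hn.ne', ← add_div]
      gcongr
    linarith

lemma fbar_triangle (T : X → X) (δ1 δ2 : ℝ) (x y z : X) :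
    fbar T (δ1 + δ2) x z ≤ fbar T δ1 x y + fbar T δ2 y z := by
  have h1 : fbar T (δ1 + δ2) x z ≤
      limsup ((fun n => fbarN T δ1 n x y) + fun n => fbarN T δ2 n y z) atTop := by
    refine limsup_le_limsup (Eventually.of_forall fun n => fbarN_triangle T δ1 δ2 n x y z)
      ((fbarN_bddUnder T (δ1+δ2) x z).isCoboundedUnder_le) ?_
    exact isBoundedUnder_of ⟨2, fun n => by
      have := fbarN_le_one T δ1 n x y
      have := fbarN_le_one T δ2 n y z
      simp only [Pi.add_apply]; linarith⟩
  refine h1.trans (limsup_add_le (fbarN_bddUnder T δ1 x y) (fbarN_bddAbove T δ1 x y)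
    ((fbarN_bddUnder T δ2 y z).isCoboundedUnder_le) (fbarN_bddAbove T δ2 y z))

lemma rho_triangle (T : X → X) (x y z : X) :
    rhoFK T x z ≤ rhoFK T x y + rhoFK T y z := by
  refine le_of_forall_pos_le_add fun ε hε => ?_
  obtain ⟨δ1, hδ1, hδ1'⟩ := exists_lt_of_csInf_lt (rho_set_nonempty T x y)
    (show sInf {δ : ℝ | 0 < δ ∧ fbar T δ x y < δ} < rhoFK T x y + ε/2 by
      unfold rhoFK; linarith [rho_nonneg T x y, hε])
  obtain ⟨δ2, hδ2, hδ2'⟩ := exists_lt_of_csInf_lt (rho_set_nonempty T y z)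
    (show sInf {δ : ℝ | 0 < δ ∧ fbar T δ y z < δ} < rhoFK T y z + ε/2 by
      unfold rhoFK; linarith [rho_nonneg T y z, hε])
  have hmem : rhoFK T x z ≤ δ1 + δ2 := by
    refine rho_le_of_mem (add_pos hδ1.1 hδ2.1) ?_
    exact (fbar_triangle T δ1 δ2 x y z).trans_lt (add_lt_add hδ1.2 hδ2.2)
  linarith

end
end FKAux

namespace FKAux
open FKPaper

section
variable {X : Type*} [MetricSpace X]

lemma shift_mem_MS (T : X → X) {δ : ℝ} (hδ : 0 < δ) {m n : ℕ} (hmn : m ≤ n) (x : X) :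
    n - m ∈ MS T δ n x (T^[m] x) := by
  refine ⟨fun s => (s : ℕ) + m, fun s => (s : ℕ), ?_, ?_, ?_, ?_, ?_⟩
  · intro a b hab
    exact add_lt_add_left (show (a:ℕ) < b from hab) m
  · intro a b hab
    exact hab
  · intro s
    show (s : ℕ) + m < n
    have := s.isLt
    omega
  · intro s
    show (s : ℕ) < n
    have := s.isLt
    omega
  · intro s
    rw [← Function.iterate_add_apply]
    simpa using hδ

lemma fbarN_shift_le (T : X → X) {δ : ℝ} (hδ : 0 < δ) {m n : ℕ} (hmn : m ≤ n) (hn : 0 < n)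
    (x : X) : fbarN T δ n x (T^[m] x) ≤ (m : ℝ) / n := by
  have h1 : n - m ≤ maxFit T δ n x (T^[m] x) := le_maxFit (shift_mem_MS T hδ hmn x)
  have hnr : (0:ℝ) < n := by exact_mod_cast hn
  have h2 : (n : ℝ) - m ≤ (maxFit T δ n x (T^[m] x) : ℝ) := by
    have : ((n - m : ℕ) : ℝ) = (n : ℝ) - m := by
      rw [Nat.cast_sub hmn]
    rw [← this]; exact_mod_cast h1
  unfold fbarN
  rw [sub_le_iff_le_add]
  have h3 : ((n : ℝ) - m) / n ≤ (maxFit T δ n x (T^[m] x) : ℝ) / n := by gcongr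
  have h4 : ((n : ℝ) - m) / n = 1 - (m : ℝ) / n := by field_simp
  linarith

lemma rho_shift (T : X → X) (m : ℕ) (x : X) : rhoFK T x (T^[m] x) = 0 := by
  have key : ∀ δ : ℝ, 0 < δ → rhoFK T x (T^[m] x) ≤ δ := by
    intro δ hδ
    refine rho_le_of_mem hδ ?_
    have hev : ∀ᶠ n : ℕ in atTop, fbarN T δ n x (T^[m] x) ≤ δ / 2 := by
      obtain ⟨N, hN⟩ := exists_nat_gt ((m : ℝ) / (δ / 2))
      filter_upwards [eventually_ge_atTop (max (N + 1) (m + 1))] with n hn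
      have hm : m ≤ n := le_trans (Nat.le_succ m) (le_trans (le_max_right _ _) hn)
      have hn0 : 0 < n := lt_of_lt_of_le (Nat.succ_pos m) (le_trans (le_max_right _ _) hn)
      refine (fbarN_shift_le T hδ hm hn0 x).trans ?_
      have hnr : (0:ℝ) < n := by exact_mod_cast hn0
      have hNn : ((m : ℝ) / (δ / 2)) < n := by
        refine hN.trans_le ?_
        exact_mod_cast le_trans (Nat.le_succ N) (le_trans (le_max_left _ _) hn)
      rw [div_le_iff₀ hnr]
      rw [div_lt_iff₀ (by linarith : (0:ℝ) < δ / 2)] at hNn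
      linarith
    have := limsup_le_of_le ((fbarN_bddUnder T δ x (T^[m] x)).isCoboundedUnder_le) hev
    calc fbar T δ x (T^[m] x) ≤ δ / 2 := this
      _ < δ := by linarith
  have h0 : rhoFK T x (T^[m] x) ≤ 0 :=
    le_of_forall_pos_le_add fun ε hε => by simpa using key ε hε
  exact le_antisymm h0 (rho_nonneg T x (T^[m] x))

end
end FKAux


open FKPaper FKAux Filter Topology MeasureTheory Set

/-- a transitive TDS is FK-continuous iff `ρ_FK` vanishes identically. -/
theorem transitive_fkContinuous_iff {X : Type*} [MetricSpace X] [CompactSpace X] [Nonempty X]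
    (T : X → X) (hT : Continuous T) (htrans : IsTransitive T) :
    (∀ x : X, FKContinuityPoint T x) ↔ ∀ x y : X, rhoFK T x y = 0 := by
  constructor
  · intro h x y
    refine le_antisymm ?_ (rho_nonneg T x y)
    refine le_of_forall_pos_le_add fun ε hε => ?_
    obtain ⟨δx, hδx, hx⟩ := h x (ε / 2) (by linarith)
    obtain ⟨δy, hδy, hy⟩ := h y (ε / 2) (by linarith)
    obtain ⟨n, hn, z, hz1, hz2⟩ := htrans (Metric.ball x δx) (Metric.ball y δy)
      Metric.isOpen_ball Metric.isOpen_ball ⟨x, Metric.mem_ball_self hδx⟩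
      ⟨y, Metric.mem_ball_self hδy⟩
    have h1 : rhoFK T x (T^[n] z) ≤ ε / 2 := by
      refine hx _ ?_
      rw [dist_comm]
      exact le_of_lt hz1
    have h2 : rhoFK T y z ≤ ε / 2 := by
      refine hy z ?_
      rw [dist_comm]
      exact le_of_lt hz2
    have h3 : rhoFK T (T^[n] z) z = 0 := by
      rw [rho_symm]; exact rho_shift T n z
    have h4 : rhoFK T z y = rhoFK T y z := rho_symm T z y
    calc rhoFK T x y ≤ rhoFK T x (T^[n] z) + rhoFK T (T^[n] z) y := rho_triangle T x _ y
      _ ≤ ε / 2 + (rhoFK T (T^[n] z) z + rhoFK T z y) :=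
          add_le_add h1 (rho_triangle T _ z y)
      _ = ε / 2 + rhoFK T y z := by rw [h3, h4]; ring
      _ ≤ ε / 2 + ε / 2 := by linarith
      _ = 0 + ε := by ring
  · intro h x ε hε
    exact ⟨1, one_pos, fun y _ => (h x y).le.trans hε.le⟩
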